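/- Let x, x₋, x̄₊ be centered square-integrable ℝⁿ-valued random vectors with E[x xᵀ] = P invertible, x̄ := P^{-1} x, P₋ := E[x₋ x₋ᵀ] and P̄₊ := E[x̄₊ x̄₊ᵀ] invertible, E[x x₋ᵀ] = P₋, E[x̄ x̄₊ᵀ] = P̄₊. Assume the conditional-orthogonality (commuting projections) property: for all a ∈ ℝⁿ, the projection of aᵀx₋ onto the span X₊ of the components of x̄₊ equals the projection onto X₊ of the projection of aᵀx₋ onto the span X of the components of x. Then E[x̄₊ x₋ᵀ] = P̄₊ P₋. -/

import Mathlib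

open Matrix MeasureTheory

/-- Cross-covariance matrix E[x yᵀ] of two (centered) random vectors. -/
noncomputable def cov {Ω : Type*} [MeasurableSpace Ω] (ℙ : Measure Ω) {n m : ℕ}
    (x : Ω → Fin n → ℝ) (y : Ω → Fin m → ℝ) : Matrix (Fin n) (Fin m) ℝ :=
  Matrix.of fun i j => ∫ ω, x ω i * y ω j ∂ℙ

/-- Orthogonal projection (in L²) of the scalar random variable `v` onto the span of the
components of the random vector `y`, expressed by the usual normal-equations formula
(valid when the Gram matrix `cov ℙ y y` is invertible). -/
noncomputable def projSpan {Ω : Type*} [MeasurableSpace Ω] (ℙ : Measure Ω) {m : ℕ}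
    (v : Ω → ℝ) (y : Ω → Fin m → ℝ) : Ω → ℝ :=
  fun ω => ((cov ℙ y y)⁻¹).mulVec (fun j => ∫ ω', v ω' * y ω' j ∂ℙ) ⬝ᵥ y ω

lemma integrable_mul_of_L2 {Ω : Type*} [MeasurableSpace Ω] {ℙ : Measure Ω}
    {f g : Ω → ℝ} (hf : MemLp f 2 ℙ) (hg : MemLp g 2 ℙ) :
    Integrable (fun ω => f ω * g ω) ℙ := by
  have h : MemLp (f • g) 1 ℙ := hg.smul hf
  rw [memLp_one_iff_integrable] at h
  exact h

lemma cov_transpose {Ω : Type*} [MeasurableSpace Ω] (ℙ : Measure Ω) {n m : ℕ}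
    (y : Ω → Fin n → ℝ) (z : Ω → Fin m → ℝ) :
    (cov ℙ y z)ᵀ = cov ℙ z y := by
  ext i j
  simp only [cov, transpose_apply, of_apply]
  exact integral_congr_ae (Filter.Eventually.of_forall fun ω => mul_comm _ _)

lemma integral_dot_mul {Ω : Type*} [MeasurableSpace Ω] (ℙ : Measure Ω) {n m : ℕ}
    (a : Fin n → ℝ) (y : Ω → Fin n → ℝ) (z : Ω → Fin m → ℝ)
    (hy : ∀ i, MemLp (fun ω => y ω i) 2 ℙ) (hz : ∀ i, MemLp (fun ω => z ω i) 2 ℙ)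
    (j : Fin m) :
    ∫ ω, (a ⬝ᵥ y ω) * z ω j ∂ℙ = (cov ℙ z y).mulVec a j := by
  have heq : ∀ ω, (a ⬝ᵥ y ω) * z ω j = ∑ i, a i * (y ω i * z ω j) := by
    intro ω
    simp [dotProduct, Finset.sum_mul, mul_assoc]
  simp_rw [heq]
  rw [integral_finset_sum]
  · simp only [Matrix.mulVec, dotProduct, cov, of_apply]
    refine Finset.sum_congr rfl fun i _ => ?_
    rw [integral_const_mul, mul_comm]
    congr 1
    exact integral_congr_ae (Filter.Eventually.of_forall fun ω => mul_comm _ _)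
  · intro i _
    exact (integrable_mul_of_L2 (hy i) (hz j)).const_mul _

theorem stmt_9 {Ω : Type*} [MeasurableSpace Ω] (ℙ : Measure Ω) [IsProbabilityMeasure ℙ]
    {n : ℕ} (x xm xbp xbar : Ω → Fin n → ℝ)
    (hx2 : ∀ i, MemLp (fun ω => x ω i) 2 ℙ)
    (hxm2 : ∀ i, MemLp (fun ω => xm ω i) 2 ℙ)
    (hxbp2 : ∀ i, MemLp (fun ω => xbp ω i) 2 ℙ)
    (hx0 : ∀ i, ∫ ω, x ω i ∂ℙ = 0)
    (hxm0 : ∀ i, ∫ ω, xm ω i ∂ℙ = 0)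
    (hxbp0 : ∀ i, ∫ ω, xbp ω i ∂ℙ = 0)
    (hPinv : IsUnit (cov ℙ x x).det)
    (hxbar : xbar = fun ω => ((cov ℙ x x)⁻¹).mulVec (x ω))
    (hPminv : IsUnit (cov ℙ xm xm).det)
    (hPbpinv : IsUnit (cov ℙ xbp xbp).det)
    (hcross1 : cov ℙ x xm = cov ℙ xm xm)
    (hcross2 : cov ℙ xbar xbp = cov ℙ xbp xbp)
    (hcomm : ∀ a : Fin n → ℝ,
      projSpan ℙ (fun ω => a ⬝ᵥ xm ω) xbp =ᵐ[ℙ]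
      projSpan ℙ (projSpan ℙ (fun ω => a ⬝ᵥ xm ω) x) xbp) :
    cov ℙ xbp xm = cov ℙ xbp xbp * cov ℙ xm xm := by
  set P := cov ℙ x x with hP
  set Pm := cov ℙ xm xm with hPm
  set Pp := cov ℙ xbp xbp with hPp
  set C := cov ℙ xbp xm with hC
  have hPsymm : Pᵀ = P := cov_transpose ℙ x x
  have hPpsymm : Ppᵀ = Pp := cov_transpose ℙ xbp xbp
  -- cov x xbp = P * Pp
  have hxxbp : cov ℙ x xbp = P * Pp := by
    have h1 : cov ℙ xbar xbp = P⁻¹ * cov ℙ x xbp := by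
      ext i j
      have h2 : cov ℙ xbar xbp i j = ∫ ω, ((P⁻¹ i) ⬝ᵥ x ω) * xbp ω j ∂ℙ := by
        simp only [cov, of_apply, hxbar, Matrix.mulVec]
      rw [h2, integral_dot_mul ℙ _ x xbp hx2 hxbp2 j]
      simp only [Matrix.mul_apply, Matrix.mulVec, dotProduct, cov, of_apply]
      refine Finset.sum_congr rfl fun k _ => ?_
      rw [mul_comm]
      congr 1
      exact integral_congr_ae (Filter.Eventually.of_forall fun ω => mul_comm _ _)
    rw [hcross2] at h1
    have h3 := congrArg (fun M => P * M) h1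
    simpa [Matrix.mul_nonsing_inv_cancel_left _ _ hPinv] using h3.symm
  have hxbpx : cov ℙ xbp x = Pp * P := by
    rw [← cov_transpose ℙ x xbp, hxxbp, Matrix.transpose_mul, hPsymm, hPpsymm]
  -- main computation with a fixed vector a
  have key : ∀ a : Fin n → ℝ, C.mulVec a = (Pp * Pm).mulVec a := by
    intro a
    have hc := hcomm a
    have hv1 : (fun j => ∫ ω', (a ⬝ᵥ xm ω') * xbp ω' j ∂ℙ) = C.mulVec a :=
      funext fun j => integral_dot_mul ℙ a xm xbp hxm2 hxbp2 j
    have hL : projSpan ℙ (fun ω => a ⬝ᵥ xm ω) xbp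
        = fun ω => (Pp⁻¹.mulVec (C.mulVec a)) ⬝ᵥ xbp ω := by
      funext ω
      simp only [projSpan, hv1, ← hPp]
    have hv2 : (fun j => ∫ ω', (a ⬝ᵥ xm ω') * x ω' j ∂ℙ) = Pm.mulVec a := by
      funext j
      rw [integral_dot_mul ℙ a xm x hxm2 hx2 j, ← hcross1]
    set b := P⁻¹.mulVec (Pm.mulVec a) with hb
    have hInner : projSpan ℙ (fun ω => a ⬝ᵥ xm ω) x = fun ω => b ⬝ᵥ x ω := by
      funext ω
      simp only [projSpan, hv2, ← hP, hb]
    have hv3 : (fun j => ∫ ω', (b ⬝ᵥ x ω') * xbp ω' j ∂ℙ) = (cov ℙ xbp x).mulVec b :=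
      funext fun j => integral_dot_mul ℙ b x xbp hx2 hxbp2 j
    have hR : projSpan ℙ (projSpan ℙ (fun ω => a ⬝ᵥ xm ω) x) xbp
        = fun ω => (Pp⁻¹.mulVec ((cov ℙ xbp x).mulVec b)) ⬝ᵥ xbp ω := by
      rw [hInner]
      funext ω
      simp only [projSpan, hv3, ← hPp]
    rw [hL, hR] at hc
    set u := Pp⁻¹.mulVec (C.mulVec a) with hu
    set w := Pp⁻¹.mulVec ((cov ℙ xbp x).mulVec b) with hw
    have hint : ∀ j, (cov ℙ xbp xbp).mulVec u j = (cov ℙ xbp xbp).mulVec w j := by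
      intro j
      rw [← integral_dot_mul ℙ u xbp xbp hxbp2 hxbp2 j,
          ← integral_dot_mul ℙ w xbp xbp hxbp2 hxbp2 j]
      exact integral_congr_ae (hc.mul (Filter.EventuallyEq.refl _ _))
    have hPpu : Pp.mulVec u = Pp.mulVec w := funext hint
    have h1 : Pp.mulVec u = C.mulVec a := by
      rw [hu, Matrix.mulVec_mulVec, Matrix.mul_nonsing_inv _ hPbpinv, Matrix.one_mulVec]
    have h2 : Pp.mulVec w = (Pp * Pm).mulVec a := by
      rw [hw, Matrix.mulVec_mulVec, Matrix.mul_nonsing_inv _ hPbpinv, Matrix.one_mulVec,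
          hxbpx, hb, Matrix.mulVec_mulVec, Matrix.mulVec_mulVec,
          Matrix.mul_nonsing_inv_cancel_right _ _ hPinv, ← Matrix.mulVec_mulVec,
          Matrix.mulVec_mulVec]
    rw [← h1, ← h2, hPpu]
  ext i j
  have hk := congrFun (key (Pi.single j 1)) i
  simpa [Matrix.mulVec_single] using hk
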